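/- arXiv:1907.04734 — 3 statements merged into one kernel-verified Lean document; each statement's English description precedes it below -/
import Mathlib

section
/- Let G be a compact Hausdorff topological group with normalized Haar probability measure μ, and let π and ρ be irreducible representations of G on complex inner product spaces V and W respectively. Let T: V → V and T': W → W be arbitrary linear maps and A, B ∈ G. Then: (i) if π and ρ are not isomorphic, ∫_G tr(π(A·g) ∘ T)·tr(ρ(g⁻¹·B) ∘ T') dμ(g) = 0; and (ii) if ρ = π (so W = V), ∫_G tr(π(A·g) ∘ T)·tr(π(g⁻¹·B) ∘ T') dμ(g) = (1/dim π)·tr(π(A·B) ∘ T' ∘ T). (Specializing T, T' to twining intertwiners gives the orthogonality relation for twining characters.) -/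
set_option linter.unusedSectionVars false


open MeasureTheory

/-- `π` is a continuous unitary representation. -/
def IsContUnitaryRep {G V : Type*} [Group G] [TopologicalSpace G]
    [NormedAddCommGroup V] [InnerProductSpace ℂ V]
    (π : G →* (V →ₗ[ℂ] V)) : Prop :=
  (Continuous fun p : G × V => π p.1 p.2) ∧
    ∀ g : G, ∀ v w : V, @inner ℂ V _ (π g v) (π g w) = @inner ℂ V _ v w

/-- `π` admits no proper nonzero invariant subspace. -/
def IsIrreducibleRep {G V : Type*} [Group G]
    [AddCommGroup V] [Module ℂ V]
    (π : G →* (V →ₗ[ℂ] V)) : Prop :=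
  ∀ W : Submodule ℂ V, (∀ g : G, W.map (π g) ≤ W) → W = ⊥ ∨ W = ⊤

/-- Isomorphism of two representations. -/
def RepIso {G V W : Type*} [Group G]
    [AddCommGroup V] [Module ℂ V] [AddCommGroup W] [Module ℂ W]
    (π : G →* (V →ₗ[ℂ] V)) (ρ : G →* (W →ₗ[ℂ] W)) : Prop :=
  ∃ e : V ≃ₗ[ℂ] W, ∀ (g : G) (v : V), e (π g v) = ρ g (e v)


lemma schur_zero {G V W : Type*} [Group G] [AddCommGroup V] [Module ℂ V]
    [AddCommGroup W] [Module ℂ W]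
    (π : G →* (V →ₗ[ℂ] V)) (ρ : G →* (W →ₗ[ℂ] W))
    (hπirr : IsIrreducibleRep π) (hρirr : IsIrreducibleRep ρ)
    (hni : ¬ RepIso π ρ) (f : V →ₗ[ℂ] W)
    (hf : ∀ g, ρ g ∘ₗ f = f ∘ₗ π g) : f = 0 := by
  have hfapp : ∀ g v, ρ g (f v) = f (π g v) := fun g v => congrArg (fun F => F v) (hf g)
  have hker : ∀ g : G, (LinearMap.ker f).map (π g) ≤ LinearMap.ker f := by
    rintro g w ⟨u, hu, rfl⟩
    simp only [LinearMap.mem_ker] at hu ⊢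
    rw [← hfapp, hu, map_zero]
  have hran : ∀ g : G, (LinearMap.range f).map (ρ g) ≤ LinearMap.range f := by
    rintro g w ⟨u, ⟨v, rfl⟩, rfl⟩
    exact ⟨π g v, (hfapp g v).symm⟩
  rcases hπirr _ hker with hk | hk
  · rcases hρirr _ hran with hr | hr
    · exact LinearMap.range_eq_bot.mp hr
    · exfalso
      apply hni
      have hbij : Function.Bijective f :=
        ⟨LinearMap.ker_eq_bot.mp hk, LinearMap.range_eq_top.mp hr⟩
      exact ⟨LinearEquiv.ofBijective f hbij, fun g v => (hfapp g v).symm⟩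
  · exact LinearMap.ker_eq_top.mp hk

lemma schur_scalar {G V : Type*} [Group G] [AddCommGroup V] [Module ℂ V]
    [FiniteDimensional ℂ V] [Nontrivial V]
    (π : G →* (V →ₗ[ℂ] V)) (hπirr : IsIrreducibleRep π)
    (f : V →ₗ[ℂ] V) (hf : ∀ g, π g ∘ₗ f = f ∘ₗ π g) :
    ∃ c : ℂ, f = c • LinearMap.id := by
  obtain ⟨c, hc⟩ := Module.End.exists_eigenvalue f
  refine ⟨c, ?_⟩
  set f' : V →ₗ[ℂ] V := f - c • LinearMap.id with hf'
  have hfapp : ∀ g v, π g (f' v) = f' (π g v) := by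
    intro g v
    have := congrArg (fun F => F v) (hf g)
    simp only [LinearMap.comp_apply] at this
    simp [hf', map_sub, this]
  have hker : ∀ g : G, (LinearMap.ker f').map (π g) ≤ LinearMap.ker f' := by
    rintro g w ⟨u, hu, rfl⟩
    simp only [LinearMap.mem_ker] at hu ⊢
    rw [← hfapp, hu, map_zero]
  have hne : LinearMap.ker f' ≠ ⊥ := by
    obtain ⟨v, hv⟩ := hc.exists_hasEigenvector
    rw [Module.End.hasEigenvector_iff] at hv
    intro h
    apply hv.2
    have : v ∈ LinearMap.ker f' := by
      have := Module.End.mem_eigenspace_iff.mp hv.1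
      simp [hf', LinearMap.mem_ker, this, sub_eq_zero]
    rw [h] at this
    simpa using this
  rcases hπirr _ hker with hk | hk
  · exact absurd hk hne
  · have h0 : f' = 0 := LinearMap.ker_eq_top.mp hk
    exact sub_eq_zero.mp (hf' ▸ h0)

lemma mul_stdBasis_mul_apply {m n : ℕ} (M : Matrix (Fin m) (Fin m) ℂ)
    (N : Matrix (Fin n) (Fin n) ℂ) (b j : Fin m) (i a : Fin n) :
    (M * Matrix.single b i (1:ℂ) * N) j a = M j b * N i a := by
  simp [Matrix.mul_apply, Matrix.single, ite_and, Finset.mul_sum,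
    mul_ite, ite_mul, Finset.sum_ite_eq, Finset.sum_ite_eq', mul_assoc]

lemma trace_stdBasis {n : ℕ} (b i : Fin n) :
    (Matrix.single b i (1:ℂ)).trace = if b = i then 1 else 0 := by
  classical
  simp only [Matrix.trace, Matrix.diag, Matrix.single, Matrix.of_apply]
  by_cases h : b = i
  · subst h; simp
  · rw [if_neg h, Finset.sum_eq_zero]
    rintro k -
    rw [if_neg]
    rintro ⟨rfl, rfl⟩
    exact h rfl

section core
variable {G : Type*} [Group G] [TopologicalSpace G] [IsTopologicalGroup G]
    [CompactSpace G] [T2Space G] [MeasurableSpace G] [BorelSpace G]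
    (μ : Measure G) [μ.IsHaarMeasure] [IsProbabilityMeasure μ]
    {V : Type*} [NormedAddCommGroup V] [InnerProductSpace ℂ V] [FiniteDimensional ℂ V]
    {W : Type*} [NormedAddCommGroup W] [InnerProductSpace ℂ W] [FiniteDimensional ℂ W]
    {n m : ℕ} (bV : Module.Basis (Fin n) ℂ V) (bW : Module.Basis (Fin m) ℂ W)
    (π : G →* (V →ₗ[ℂ] V)) (ρ : G →* (W →ₗ[ℂ] W))

lemma haar_right_inv : μ.IsMulRightInvariant := by
  constructor
  intro g
  have : IsProbabilityMeasure (Measure.map (· * g) μ) :=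
    Measure.isProbabilityMeasure_map (measurable_mul_const g).aemeasurable
  exact Measure.isHaarMeasure_eq_of_isProbabilityMeasure _ μ

lemma cont_integrable (f : G → ℂ) (hf : Continuous f) : Integrable f μ :=
  hf.integrable_of_hasCompactSupport (HasCompactSupport.of_compactSpace f)

lemma cont_entry {ι : Type*} [Fintype ι] [DecidableEq ι]
    (b : Module.Basis ι ℂ V) (σ : G → (V →ₗ[ℂ] V))
    (hc : Continuous fun p : G × V => σ p.1 p.2) (i j : ι) :
    Continuous fun g => LinearMap.toMatrix b b (σ g) i j := by
  simp only [LinearMap.toMatrix_apply]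
  have h1 : Continuous fun g => σ g (b j) :=
    hc.comp (continuous_id.prodMk continuous_const)
  have h2 : Continuous fun v : V => b.repr v i :=
    LinearMap.continuous_of_finiteDimensional
      ((Finsupp.lapply i).comp (b.repr : V →ₗ[ℂ] (ι →₀ ℂ)))
  exact h2.comp h1

set_option linter.unusedSectionVars false

/-- matrix of `π g`. -/
noncomputable def Pm (g : G) : Matrix (Fin n) (Fin n) ℂ := LinearMap.toMatrix bV bV (π g)

lemma Pm_mul (g h : G) : Pm bV π (g * h) = Pm bV π g * Pm bV π h := by
  simp [Pm, map_mul, LinearMap.toMatrix_mul]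

lemma Pm_one : Pm bV π 1 = 1 := by simp [Pm, map_one, LinearMap.toMatrix_one]

lemma Pm_cont (hπc : Continuous fun p : G × V => π p.1 p.2) (i j : Fin n) :
    Continuous fun g => Pm bV π g i j :=
  cont_entry bV (fun g => π g) hπc i j

lemma Pm_inv_cont (hπc : Continuous fun p : G × V => π p.1 p.2) (i j : Fin n) :
    Continuous fun g => Pm bV π g⁻¹ i j :=
  (Pm_cont bV π hπc i j).comp continuous_inv

lemma cont_QYP (hπc : Continuous fun p : G × V => π p.1 p.2)
    (hρc : Continuous fun p : G × W => ρ p.1 p.2) (Y : Matrix (Fin m) (Fin n) ℂ) (k : Fin m) (l : Fin n) :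
    Continuous fun g => (Pm bW ρ g⁻¹ * Y * Pm bV π g) k l := by
  simp only [Matrix.mul_apply]
  refine continuous_finset_sum _ fun c _ => Continuous.mul ?_ (Pm_cont bV π hπc c l)
  exact continuous_finset_sum _ fun d _ =>
    (Pm_inv_cont bW ρ hρc k d).mul continuous_const

/-- the averaged operator, as a matrix. -/
noncomputable def PhiMat (Y : Matrix (Fin m) (Fin n) ℂ) : Matrix (Fin m) (Fin n) ℂ :=
  Matrix.of fun k l => ∫ g, (Pm bW ρ g⁻¹ * Y * Pm bV π g) k l ∂μ

lemma phimat_mul_left (hπc : Continuous fun p : G × V => π p.1 p.2)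
    (hρc : Continuous fun p : G × W => ρ p.1 p.2) (Y : Matrix (Fin m) (Fin n) ℂ) (h : G) :
    Pm bW ρ h * PhiMat μ bV bW π ρ Y
      = Matrix.of fun k l => ∫ g, (Pm bW ρ (h * g⁻¹) * Y * Pm bV π g) k l ∂μ := by
  ext k l
  rw [Matrix.mul_apply]
  simp only [PhiMat, Matrix.of_apply]
  have h1 : ∀ a : Fin m, Pm bW ρ h k a * ∫ g, (Pm bW ρ g⁻¹ * Y * Pm bV π g) a l ∂μ
      = ∫ g, Pm bW ρ h k a * (Pm bW ρ g⁻¹ * Y * Pm bV π g) a l ∂μ := fun a =>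
    (integral_const_mul _ _).symm
  rw [Finset.sum_congr rfl fun a _ => h1 a,
    ← integral_finset_sum _ fun a _ => cont_integrable μ
      (fun g => Pm bW ρ h k a * (Pm bW ρ g⁻¹ * Y * Pm bV π g) a l)
      (continuous_const.mul (cont_QYP bV bW π ρ hπc hρc Y a l))]
  congr 1
  ext g
  rw [← Matrix.mul_apply, ← Matrix.mul_assoc, ← Matrix.mul_assoc, ← Pm_mul]

lemma phimat_mul_right (hπc : Continuous fun p : G × V => π p.1 p.2)
    (hρc : Continuous fun p : G × W => ρ p.1 p.2) (Y : Matrix (Fin m) (Fin n) ℂ) (h : G) :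
    PhiMat μ bV bW π ρ Y * Pm bV π h
      = Matrix.of fun k l => ∫ g, (Pm bW ρ g⁻¹ * Y * Pm bV π (g * h)) k l ∂μ := by
  ext k l
  rw [Matrix.mul_apply]
  simp only [PhiMat, Matrix.of_apply]
  have h1 : ∀ b : Fin n, (∫ g, (Pm bW ρ g⁻¹ * Y * Pm bV π g) k b ∂μ) * Pm bV π h b l
      = ∫ g, (Pm bW ρ g⁻¹ * Y * Pm bV π g) k b * Pm bV π h b l ∂μ := fun b =>
    (integral_mul_const _ _).symm
  rw [Finset.sum_congr rfl fun b _ => h1 b,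
    ← integral_finset_sum _ fun b _ => cont_integrable μ
      (fun g => (Pm bW ρ g⁻¹ * Y * Pm bV π g) k b * Pm bV π h b l)
      ((cont_QYP bV bW π ρ hπc hρc Y k b).mul continuous_const)]
  congr 1
  ext g
  rw [← Matrix.mul_apply, Pm_mul, ← Matrix.mul_assoc]

lemma phimat_intertwine (hπc : Continuous fun p : G × V => π p.1 p.2)
    (hρc : Continuous fun p : G × W => ρ p.1 p.2) (Y : Matrix (Fin m) (Fin n) ℂ) (h : G) :
    Pm bW ρ h * PhiMat μ bV bW π ρ Y = PhiMat μ bV bW π ρ Y * Pm bV π h := by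
  haveI := haar_right_inv μ
  rw [phimat_mul_left μ bV bW π ρ hπc hρc, phimat_mul_right μ bV bW π ρ hπc hρc]
  ext k l
  simp only [Matrix.of_apply]
  have := integral_mul_right_eq_self (μ := μ)
    (fun g => (Pm bW ρ g⁻¹ * Y * Pm bV π (g * h)) k l) h⁻¹
  rw [← this]
  congr 1
  ext g
  simp [mul_assoc, mul_inv_rev]

lemma philin_intertwine (hπc : Continuous fun p : G × V => π p.1 p.2)
    (hρc : Continuous fun p : G × W => ρ p.1 p.2) (Y : Matrix (Fin m) (Fin n) ℂ) (h : G) :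
    ρ h ∘ₗ Matrix.toLin bV bW (PhiMat μ bV bW π ρ Y)
      = Matrix.toLin bV bW (PhiMat μ bV bW π ρ Y) ∘ₗ π h := by
  apply (LinearMap.toMatrix bV bW).injective
  rw [LinearMap.toMatrix_comp bV bW bW, LinearMap.toMatrix_comp bV bV bW,
    LinearMap.toMatrix_toLin]
  exact phimat_intertwine μ bV bW π ρ hπc hρc Y h


lemma phimat_zero (hπc : Continuous fun p : G × V => π p.1 p.2)
    (hρc : Continuous fun p : G × W => ρ p.1 p.2)
    (hπirr : IsIrreducibleRep π) (hρirr : IsIrreducibleRep ρ)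
    (hne : ¬ RepIso π ρ) (Y : Matrix (Fin m) (Fin n) ℂ) :
    PhiMat μ bV bW π ρ Y = 0 := by
  have h0 : Matrix.toLin bV bW (PhiMat μ bV bW π ρ Y) = 0 :=
    schur_zero π ρ hπirr hρirr hne _
      (fun h => philin_intertwine μ bV bW π ρ hπc hρc Y h)
  have := congrArg (LinearMap.toMatrix bV bW) h0
  simpa [LinearMap.toMatrix_toLin] using this

lemma phimat_trace (hπc : Continuous fun p : G × V => π p.1 p.2)
    (Y : Matrix (Fin n) (Fin n) ℂ) :
    (PhiMat μ bV bV π π Y).trace = Y.trace := by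
  rw [Matrix.trace]
  simp only [Matrix.diag, PhiMat, Matrix.of_apply]
  rw [← integral_finset_sum _ fun j _ => cont_integrable μ _
      (cont_QYP bV bV π π hπc hπc Y j j)]
  have hconst : ∀ g : G, (∑ j, (Pm bV π g⁻¹ * Y * Pm bV π g) j j) = Y.trace := by
    intro g
    have h1 : (∑ j, (Pm bV π g⁻¹ * Y * Pm bV π g) j j)
        = (Pm bV π g⁻¹ * Y * Pm bV π g).trace := rfl
    rw [h1, Matrix.trace_mul_comm, ← Matrix.mul_assoc, ← Pm_mul, mul_inv_cancel,
      Pm_one, Matrix.one_mul]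
  rw [integral_congr_ae (Filter.Eventually.of_forall hconst)]
  simp

lemma phimat_scalar (hπc : Continuous fun p : G × V => π p.1 p.2)
    (hπirr : IsIrreducibleRep π) [Nontrivial V]
    (Y : Matrix (Fin n) (Fin n) ℂ) :
    PhiMat μ bV bV π π Y = (Y.trace / (n : ℂ)) • 1 := by
  have hn : (n : ℂ) ≠ 0 := by
    have : Nonempty (Fin n) := bV.index_nonempty
    simp only [ne_eq, Nat.cast_eq_zero]
    rintro rfl
    exact (Fin.pos_iff_nonempty.mpr this).ne' rfl
  obtain ⟨c, hc⟩ := schur_scalar π hπirr (Matrix.toLin bV bV (PhiMat μ bV bV π π Y))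
    (fun h => philin_intertwine μ bV bV π π hπc hπc Y h)
  have hmat : PhiMat μ bV bV π π Y = c • 1 := by
    have := congrArg (LinearMap.toMatrix bV bV) hc
    simpa [LinearMap.toMatrix_toLin, LinearMap.toMatrix_id] using this
  have htr := phimat_trace μ bV π hπc Y
  rw [hmat] at htr
  simp only [Matrix.trace_smul, Matrix.trace_one, smul_eq_mul, Fintype.card_fin] at htr
  rw [hmat]
  congr 1
  field_simp
  linear_combination htr


lemma K_zero (hπc : Continuous fun p : G × V => π p.1 p.2)
    (hρc : Continuous fun p : G × W => ρ p.1 p.2)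
    (hπirr : IsIrreducibleRep π) (hρirr : IsIrreducibleRep ρ)
    (hne : ¬ RepIso π ρ) (j b : Fin m) (i a : Fin n) :
    ∫ g, Pm bW ρ g⁻¹ j b * Pm bV π g i a ∂μ = 0 := by
  have h := phimat_zero μ bV bW π ρ hπc hρc hπirr hρirr hne (Matrix.single b i 1)
  have h2 := congrArg (fun M => M j a) h
  simp only [PhiMat, Matrix.of_apply, Matrix.zero_apply] at h2
  rw [← h2]
  congr 1
  ext g
  rw [mul_stdBasis_mul_apply]

lemma K_diag (hπc : Continuous fun p : G × V => π p.1 p.2)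
    (hπirr : IsIrreducibleRep π) [Nontrivial V] (j b i a : Fin n) :
    ∫ g, Pm bV π g⁻¹ j b * Pm bV π g i a ∂μ
      = (if b = i then (1:ℂ) else 0) * (if j = a then 1 else 0) / (n : ℂ) := by
  have h := phimat_scalar μ bV π hπc hπirr (Matrix.single b i (1:ℂ))
  have h2 := congrArg (fun M => M j a) h
  simp only [PhiMat, Matrix.of_apply, Matrix.smul_apply, Matrix.one_apply,
    trace_stdBasis, smul_eq_mul] at h2
  have h3 : (∫ g, Pm bV π g⁻¹ j b * Pm bV π g i a ∂μ)
      = ∫ g, (Pm bV π g⁻¹ * Matrix.single b i (1:ℂ) * Pm bV π g) j a ∂μ := by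
    congr 1
    ext g
    rw [mul_stdBasis_mul_apply]
  rw [h3, h2]
  by_cases hji : j = a <;> by_cases hbi : b = i <;>
    simp [hji, hbi, div_eq_mul_inv, mul_comm]

lemma expand_integral {n m : ℕ}
    (P : G → Matrix (Fin n) (Fin n) ℂ) (Q : G → Matrix (Fin m) (Fin m) ℂ)
    (hP : ∀ i j, Continuous fun g => P g i j)
    (hQ : ∀ i j, Continuous fun g => Q g⁻¹ i j)
    (C : Matrix (Fin n) (Fin n) ℂ) (D : Matrix (Fin m) (Fin m) ℂ) :
    ∫ g, (P g * C).trace * (Q g⁻¹ * D).trace ∂μ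
      = ∑ p : Fin n × Fin n, ∑ q : Fin m × Fin m,
          C p.2 p.1 * D q.2 q.1 * ∫ g, Q g⁻¹ q.1 q.2 * P g p.1 p.2 ∂μ := by
  have hpt : ∀ g : G, (P g * C).trace * (Q g⁻¹ * D).trace
      = ∑ p : Fin n × Fin n, ∑ q : Fin m × Fin m,
          C p.2 p.1 * D q.2 q.1 * (Q g⁻¹ q.1 q.2 * P g p.1 p.2) := by
    intro g
    have h1 : (P g * C).trace = ∑ p : Fin n × Fin n, P g p.1 p.2 * C p.2 p.1 := by
      rw [Matrix.trace]
      simp only [Matrix.diag, Matrix.mul_apply]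
      rw [Fintype.sum_prod_type]
    have h2 : (Q g⁻¹ * D).trace = ∑ q : Fin m × Fin m, Q g⁻¹ q.1 q.2 * D q.2 q.1 := by
      rw [Matrix.trace]
      simp only [Matrix.diag, Matrix.mul_apply]
      rw [Fintype.sum_prod_type]
    rw [h1, h2, Finset.sum_mul_sum]
    refine Finset.sum_congr rfl fun p _ => Finset.sum_congr rfl fun q _ => ?_
    ring
  have hint : ∀ (p : Fin n × Fin n) (q : Fin m × Fin m),
      Integrable (fun g => C p.2 p.1 * D q.2 q.1 * (Q g⁻¹ q.1 q.2 * P g p.1 p.2)) μ :=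
    fun p q => cont_integrable μ _
      (continuous_const.mul ((hQ q.1 q.2).mul (hP p.1 p.2)))
  rw [integral_congr_ae (Filter.Eventually.of_forall hpt),
    integral_finset_sum _ fun p _ => integrable_finset_sum _ fun q _ => hint p q]
  refine Finset.sum_congr rfl fun p _ => ?_
  rw [integral_finset_sum _ fun q _ => hint p q]
  exact Finset.sum_congr rfl fun q _ => integral_const_mul _ _

end core

lemma sum_K_diag {n : ℕ} (C D : Matrix (Fin n) (Fin n) ℂ) :
    ∑ p : Fin n × Fin n, ∑ q : Fin n × Fin n,
        C p.2 p.1 * D q.2 q.1 *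
          ((if q.2 = p.1 then (1:ℂ) else 0) * (if q.1 = p.2 then 1 else 0) / (n : ℂ))
      = (1 / (n : ℂ)) * (C * D).trace := by
  classical
  have h1 : ∀ p : Fin n × Fin n, (∑ q : Fin n × Fin n,
      C p.2 p.1 * D q.2 q.1 *
        ((if q.2 = p.1 then (1:ℂ) else 0) * (if q.1 = p.2 then 1 else 0) / (n : ℂ)))
      = C p.2 p.1 * D p.1 p.2 / (n : ℂ) := by
    intro p
    rw [Finset.sum_eq_single ((p.2, p.1) : Fin n × Fin n)]
    · simp
      ring
    · intro q _ hq
      by_cases hh1 : q.2 = p.1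
      · by_cases hh2 : q.1 = p.2
        · exact absurd (Prod.ext hh2 hh1) hq
        · simp [hh2]
      · simp [hh1]
    · intro h
      exact absurd (Finset.mem_univ _) h
  rw [Finset.sum_congr rfl fun p _ => h1 p, Fintype.sum_prod_type]
  have h2 : ∀ p1 : Fin n, (∑ p2, C p2 p1 * D p1 p2 / (n : ℂ)) = (D * C) p1 p1 / (n : ℂ) := by
    intro p1
    rw [Matrix.mul_apply, Finset.sum_div]
    exact Finset.sum_congr rfl fun p2 _ => by ring
  rw [Finset.sum_congr rfl fun p1 _ => h2 p1, ← Finset.sum_div]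
  have h3 : (∑ p1, (D * C) p1 p1) = (D * C).trace := rfl
  rw [h3, Matrix.trace_mul_comm]
  ring

/-- Orthogonality relations with arbitrary linear maps inserted: for non-isomorphic
irreducibles `π`, `ρ` one has `∫ tr(π(A g) T) tr(ρ(g⁻¹ B) T') dμ(g) = 0`, while for
`ρ = π` one has `∫ tr(π(A g) S) tr(π(g⁻¹ B) S') dμ(g) = tr(π(A B) S' S)/dim π`. -/
theorem twisted_orthogonality
    {G : Type*} [Group G] [TopologicalSpace G] [IsTopologicalGroup G]
    [CompactSpace G] [T2Space G] [MeasurableSpace G] [BorelSpace G]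
    (μ : Measure G) [μ.IsHaarMeasure] [IsProbabilityMeasure μ]
    {V : Type*} [NormedAddCommGroup V] [InnerProductSpace ℂ V] [FiniteDimensional ℂ V]
    {W : Type*} [NormedAddCommGroup W] [InnerProductSpace ℂ W] [FiniteDimensional ℂ W]
    (π : G →* (V →ₗ[ℂ] V)) (ρ : G →* (W →ₗ[ℂ] W))
    (hπrep : IsContUnitaryRep π) (hπirr : IsIrreducibleRep π)
    (hρrep : IsContUnitaryRep ρ) (hρirr : IsIrreducibleRep ρ)
    (T : V →ₗ[ℂ] V) (T' : W →ₗ[ℂ] W) (A B : G) :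
    (¬ RepIso π ρ →
      ∫ g, LinearMap.trace ℂ V (π (A * g) ∘ₗ T) * LinearMap.trace ℂ W (ρ (g⁻¹ * B) ∘ₗ T') ∂μ
        = 0) ∧
    ∀ S S' : V →ₗ[ℂ] V,
      ∫ g, LinearMap.trace ℂ V (π (A * g) ∘ₗ S) * LinearMap.trace ℂ V (π (g⁻¹ * B) ∘ₗ S') ∂μ
        = (1 / (Module.finrank ℂ V : ℂ)) * LinearMap.trace ℂ V (π (A * B) ∘ₗ S' ∘ₗ S) := by
  classical
  obtain ⟨hπc, -⟩ := hπrep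
  obtain ⟨hρc, -⟩ := hρrep
  let bV : Module.Basis (Fin (Module.finrank ℂ V)) ℂ V := Module.finBasis ℂ V
  let bW : Module.Basis (Fin (Module.finrank ℂ W)) ℂ W := Module.finBasis ℂ W
  constructor
  · intro hne
    have hC : ∀ g : G, LinearMap.trace ℂ V (π (A * g) ∘ₗ T)
        = (Pm bV π g * (LinearMap.toMatrix bV bV T * Pm bV π A)).trace := by
      intro g
      rw [LinearMap.trace_eq_matrix_trace ℂ bV, LinearMap.toMatrix_comp bV bV bV]
      show (Pm bV π (A * g) * _).trace = _
      rw [Pm_mul, Matrix.mul_assoc, Matrix.trace_mul_comm, Matrix.mul_assoc]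
    have hD : ∀ g : G, LinearMap.trace ℂ W (ρ (g⁻¹ * B) ∘ₗ T')
        = (Pm bW ρ g⁻¹ * (Pm bW ρ B * LinearMap.toMatrix bW bW T')).trace := by
      intro g
      rw [LinearMap.trace_eq_matrix_trace ℂ bW, LinearMap.toMatrix_comp bW bW bW]
      show (Pm bW ρ (g⁻¹ * B) * _).trace = _
      rw [Pm_mul, Matrix.mul_assoc]
    simp only [hC, hD]
    rw [expand_integral μ (Pm bV π) (Pm bW ρ)
      (fun i j => Pm_cont bV π hπc i j) (fun i j => Pm_inv_cont bW ρ hρc i j)]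
    simp [K_zero μ bV bW π ρ hπc hρc hπirr hρirr hne]
  · intro S S'
    by_cases hn : Module.finrank ℂ V = 0
    · have hb : ∀ f : V →ₗ[ℂ] V, LinearMap.trace ℂ V f = 0 := by
        intro f
        rw [LinearMap.trace_eq_matrix_trace ℂ bV]
        have : IsEmpty (Fin (Module.finrank ℂ V)) := by rw [hn]; infer_instance
        simp [Matrix.trace]
      simp [hb]
    · have hnt : Nontrivial V := by
        exact Module.nontrivial_of_finrank_pos (R := ℂ) (Nat.pos_of_ne_zero hn)
      have hC : ∀ g : G, LinearMap.trace ℂ V (π (A * g) ∘ₗ S)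
          = (Pm bV π g * (LinearMap.toMatrix bV bV S * Pm bV π A)).trace := by
        intro g
        rw [LinearMap.trace_eq_matrix_trace ℂ bV, LinearMap.toMatrix_comp bV bV bV]
        show (Pm bV π (A * g) * _).trace = _
        rw [Pm_mul, Matrix.mul_assoc, Matrix.trace_mul_comm, Matrix.mul_assoc]
      have hD : ∀ g : G, LinearMap.trace ℂ V (π (g⁻¹ * B) ∘ₗ S')
          = (Pm bV π g⁻¹ * (Pm bV π B * LinearMap.toMatrix bV bV S')).trace := by
        intro g
        rw [LinearMap.trace_eq_matrix_trace ℂ bV, LinearMap.toMatrix_comp bV bV bV]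
        show (Pm bV π (g⁻¹ * B) * _).trace = _
        rw [Pm_mul, Matrix.mul_assoc]
      simp only [hC, hD]
      rw [expand_integral μ (Pm bV π) (Pm bV π)
        (fun i j => Pm_cont bV π hπc i j) (fun i j => Pm_inv_cont bV π hπc i j)]
      simp only [K_diag μ bV π hπc hπirr]
      rw [sum_K_diag]
      congr 1
      rw [LinearMap.trace_eq_matrix_trace ℂ bV,
        LinearMap.toMatrix_comp bV bV bV (π (A * B)) (S' ∘ₗ S),
        LinearMap.toMatrix_comp bV bV bV S' S]
      show ((LinearMap.toMatrix bV bV S * Pm bV π A) * (Pm bV π B * LinearMap.toMatrix bV bV S')).trace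
        = (Pm bV π (A * B) * (LinearMap.toMatrix bV bV S' * LinearMap.toMatrix bV bV S)).trace
      have hre : (LinearMap.toMatrix bV bV S * Pm bV π A) * (Pm bV π B * LinearMap.toMatrix bV bV S')
          = LinearMap.toMatrix bV bV S * (Pm bV π (A * B) * LinearMap.toMatrix bV bV S') := by
        rw [Pm_mul]
        noncomm_ring
      rw [hre, Matrix.trace_mul_comm, Matrix.mul_assoc]
end

section
/- Let G be a compact Hausdorff topological group with normalized Haar probability measure μ, π an irreducible representation of G on a complex inner product space V with character χ_π, and T: V → V an arbitrary linear map. Then for all A, B ∈ G: ∫_G tr(π(A·g·B·g⁻¹) ∘ T) dμ(g) = (1/dim π)·χ_π(B)·tr(π(A) ∘ T). In particular, for a twining character χ_π^ω(g) = tr(π(g) ∘ T) one has ∫_G χ_π^ω(A·g·B·g⁻¹) dμ(g) = (1/dim π)·χ_π(B)·χ_π^ω(A) (the fusion relation for twining characters). -/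
open MeasureTheory

private theorem twisted_fusion_aux
    {G : Type*} [Group G] [TopologicalSpace G] [IsTopologicalGroup G]
    [CompactSpace G] [T2Space G] [MeasurableSpace G] [BorelSpace G]
    (μ : Measure G) [μ.IsHaarMeasure] [IsProbabilityMeasure μ]
    {V : Type*} [NormedAddCommGroup V] [InnerProductSpace ℂ V] [FiniteDimensional ℂ V]
    (π : G →* (V →ₗ[ℂ] V))
    (hrep : (Continuous fun p : G × V => π p.1 p.2) ∧
      ∀ g : G, ∀ v w : V, @inner ℂ V _ (π g v) (π g w) = @inner ℂ V _ v w)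
    (hirr : ∀ W : Submodule ℂ V, (∀ g : G, W.map (π g) ≤ W) → W = ⊥ ∨ W = ⊤)
    (T : V →ₗ[ℂ] V) (A B : G) :
    ∫ g, LinearMap.trace ℂ V (π (A * g * B * g⁻¹) ∘ₗ T) ∂μ
      = (1 / (Module.finrank ℂ V : ℂ)) * LinearMap.trace ℂ V (π B)
          * LinearMap.trace ℂ V (π A ∘ₗ T) := by
  classical
  rcases subsingleton_or_nontrivial V with hV | hV
  · have hz : ∀ f : V →ₗ[ℂ] V, LinearMap.trace ℂ V f = 0 := by
      intro f
      have : f = 0 := Subsingleton.elim _ _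
      simp [this]
    simp [hz]
  -- continuity of `g ↦ π g` as a continuous-linear-map-valued function
  set e : (V →ₗ[ℂ] V) ≃ₗ[ℂ] (V →L[ℂ] V) := LinearMap.toContinuousLinearMap with he
  set Pb : G → (V →L[ℂ] V) := fun g => e (π g) with hPdef
  have hPb_apply : ∀ g v, Pb g v = π g v := by intro g v; simp [hPdef, he]
  have hPbcont : Continuous Pb := by
    let b := Module.finBasis ℂ V
    have hfac : ∀ g, Pb g = (e.toLinearMap ∘ₗ (b.constr ℂ).toLinearMap)
        (fun i => π g (b i)) := by
      intro g
      have hcon : (b.constr ℂ) (fun i => π g (b i)) = π g :=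
        b.ext fun i => by simp [Module.Basis.constr_basis]
      simp [hPdef, hcon]
    have hc1 : Continuous fun g : G => (fun i => π g (b i) : _ → V) := by
      apply continuous_pi
      intro i
      exact hrep.1.comp (continuous_id.prodMk continuous_const)
    have hc2 : Continuous (e.toLinearMap ∘ₗ (b.constr ℂ).toLinearMap) :=
      LinearMap.continuous_of_finiteDimensional _
    have hPb_eq : Pb = fun g => (e.toLinearMap ∘ₗ (b.constr ℂ).toLinearMap)
        (fun i => π g (b i)) := funext hfac
    rw [hPb_eq]
    exact hc2.comp hc1
  set F : G → (V →L[ℂ] V) := fun g => (Pb g ∘L Pb B) ∘L Pb g⁻¹ with hF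
  have hFcont : Continuous F :=
    ((hPbcont.clm_comp continuous_const)).clm_comp (hPbcont.comp continuous_inv)
  have hFint : Integrable F μ :=
    hFcont.integrable_of_hasCompactSupport (HasCompactSupport.of_compactSpace F)
  set M : V →L[ℂ] V := ∫ g, F g ∂μ with hM
  -- M commutes with π
  have hcomm : ∀ h : G, Pb h ∘L M = M ∘L Pb h := by
    intro h
    have h1 : Pb h ∘L M = ∫ g, Pb h ∘L F g ∂μ :=
      ((ContinuousLinearMap.compL ℂ V V V (Pb h)).integral_comp_comm hFint).symm
    have h2 : M ∘L Pb h = ∫ g, F g ∘L Pb h ∂μ :=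
      (((ContinuousLinearMap.compL ℂ V V V).flip (Pb h)).integral_comp_comm hFint).symm
    have key : ∀ g : G, Pb h ∘L F g = F (h * g) ∘L Pb h := by
      intro g
      ext v
      have hop : π h * (π g * π B * π g⁻¹) = π (h*g) * π B * π (h*g)⁻¹ * π h := by
        rw [← map_mul, ← map_mul, ← map_mul, ← map_mul, ← map_mul, ← map_mul]
        congr 1
        group
      have happ := congrArg (fun f : V →ₗ[ℂ] V => f v) hop
      simp only [Module.End.mul_apply] at happ
      simpa [ContinuousLinearMap.comp_apply, hPb_apply, hF] using happ
    rw [h1, h2]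
    calc ∫ g, Pb h ∘L F g ∂μ = ∫ g, F (h * g) ∘L Pb h ∂μ := by
          simp only [key]
      _ = ∫ g, F g ∘L Pb h ∂μ :=
          integral_mul_left_eq_self (fun g => F g ∘L Pb h) h
  -- Schur: M is a scalar
  set M' : V →ₗ[ℂ] V := (M : V →ₗ[ℂ] V) with hM'
  have hcomm' : ∀ h : G, π h ∘ₗ M' = M' ∘ₗ π h := by
    intro h
    ext v
    have := congrArg (fun (f : V →L[ℂ] V) => f v) (hcomm h)
    simpa [hPb_apply, hM'] using this
  obtain ⟨c, hc⟩ := Module.End.exists_eigenvalue (M' : Module.End ℂ V)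
  have hW : Module.End.eigenspace (M' : Module.End ℂ V) c = ⊤ := by
    have hinv : ∀ g : G,
        (Module.End.eigenspace (M' : Module.End ℂ V) c).map (π g)
          ≤ Module.End.eigenspace (M' : Module.End ℂ V) c := by
      intro g
      rintro x ⟨v, hv, rfl⟩
      have hv' := Module.End.mem_eigenspace_iff.mp hv
      refine Module.End.mem_eigenspace_iff.mpr ?_
      have hswap : M' (π g v) = π g (M' v) := by
        have := congrArg (fun f : V →ₗ[ℂ] V => f v) (hcomm' g)
        simpa using this.symm
      rw [hswap, hv']; exact (π g).map_smul c v
    rcases hirr (Module.End.eigenspace (M' : Module.End ℂ V) c) hinv with h | h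
    · exact absurd h hc
    · exact h
  have hMsc : M' = c • LinearMap.id := by
    ext v
    have hv : v ∈ Module.End.eigenspace (M' : Module.End ℂ V) c := hW ▸ Submodule.mem_top
    rw [Module.End.mem_eigenspace_iff] at hv
    simpa using hv
  -- trace of M equals trace of π B
  have n_ne : (Module.finrank ℂ V : ℂ) ≠ 0 := by
    have : 0 < Module.finrank ℂ V := Module.finrank_pos
    exact_mod_cast Nat.cast_ne_zero.mpr this.ne'
  set trC : (V →L[ℂ] V) →L[ℂ] ℂ :=
    LinearMap.toContinuousLinearMap
      ((LinearMap.trace ℂ V) ∘ₗ (ContinuousLinearMap.coeLM ℂ)) with htrC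
  have htrC_apply : ∀ L : V →L[ℂ] V, trC L = LinearMap.trace ℂ V (L : V →ₗ[ℂ] V) := by
    intro L; simp [htrC]
  have hFlm : ∀ g, ((F g : V →L[ℂ] V) : V →ₗ[ℂ] V) = π g ∘ₗ π B ∘ₗ π g⁻¹ := by
    intro g
    ext v
    simp [hF, hPb_apply]
  have htrM : LinearMap.trace ℂ V M' = LinearMap.trace ℂ V (π B) := by
    have h1 : trC M = ∫ g, trC (F g) ∂μ := (trC.integral_comp_comm hFint).symm
    have hid : ∀ g : G, π g⁻¹ ∘ₗ π g = LinearMap.id := by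
      intro g
      rw [← Module.End.mul_eq_comp, ← map_mul, inv_mul_cancel, map_one,
        Module.End.one_eq_id]
    have h2 : ∀ g : G, trC (F g) = LinearMap.trace ℂ V (π B) := by
      intro g
      rw [htrC_apply, hFlm]
      calc LinearMap.trace ℂ V (π g ∘ₗ π B ∘ₗ π g⁻¹)
          = LinearMap.trace ℂ V ((π B ∘ₗ π g⁻¹) ∘ₗ π g) :=
            LinearMap.trace_comp_comm' _ _
        _ = LinearMap.trace ℂ V (π B) := by
            rw [LinearMap.comp_assoc, hid, LinearMap.comp_id]
    have h3 : trC M = LinearMap.trace ℂ V (π B) := by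
      rw [h1]
      simp [h2]
    rw [hM', ← htrC_apply]
    exact h3
  have hc_val : c * (Module.finrank ℂ V : ℂ) = LinearMap.trace ℂ V (π B) := by
    have := htrM
    rw [hMsc] at this
    simpa [LinearMap.trace_id, mul_comm] using this
  -- final computation
  set Φ₀ : (V →ₗ[ℂ] V) →ₗ[ℂ] ℂ :=
    { toFun := fun L => LinearMap.trace ℂ V (π A ∘ₗ L ∘ₗ T)
      map_add' := by intro x y; simp [LinearMap.comp_add, LinearMap.add_comp]
      map_smul' := by intro m x; simp [LinearMap.comp_smul, LinearMap.smul_comp] } with hΦ₀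
  set Φ : (V →L[ℂ] V) →L[ℂ] ℂ :=
    LinearMap.toContinuousLinearMap (Φ₀ ∘ₗ (ContinuousLinearMap.coeLM ℂ)) with hΦ
  have hΦ_apply : ∀ L : V →L[ℂ] V,
      Φ L = LinearMap.trace ℂ V (π A ∘ₗ (L : V →ₗ[ℂ] V) ∘ₗ T) := by
    intro L; simp [hΦ, hΦ₀]
  have hpt : ∀ g : G, LinearMap.trace ℂ V (π (A * g * B * g⁻¹) ∘ₗ T) = Φ (F g) := by
    intro g
    rw [hΦ_apply, hFlm]
    congr 1
    ext v
    have hprod : π (A * g * B * g⁻¹) = π A * π g * π B * π g⁻¹ := by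
      simp only [← map_mul]
    simp [hprod, Module.End.mul_apply]
  calc ∫ g, LinearMap.trace ℂ V (π (A * g * B * g⁻¹) ∘ₗ T) ∂μ
      = ∫ g, Φ (F g) ∂μ := by simp only [hpt]
    _ = Φ M := Φ.integral_comp_comm hFint
    _ = LinearMap.trace ℂ V (π A ∘ₗ M' ∘ₗ T) := hΦ_apply M
    _ = c * LinearMap.trace ℂ V (π A ∘ₗ T) := by
        rw [hMsc]
        simp [LinearMap.comp_smul, LinearMap.smul_comp, smul_eq_mul]
    _ = (1 / (Module.finrank ℂ V : ℂ)) * LinearMap.trace ℂ V (π B)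
          * LinearMap.trace ℂ V (π A ∘ₗ T) := by
        rw [← hc_val]; field_simp

/-- Fusion relation with an arbitrary linear map inserted: for an irreducible unitary
representation `π` of a compact group and any linear `T : V → V`,
`∫ tr(π(A g B g⁻¹) ∘ T) dμ(g) = χ_π(B) tr(π(A) ∘ T) / dim π`.
Specializing `T` to a twining intertwiner gives the fusion relation for twining
characters. -/
theorem twisted_fusion
    {G : Type*} [Group G] [TopologicalSpace G] [IsTopologicalGroup G]
    [CompactSpace G] [T2Space G] [MeasurableSpace G] [BorelSpace G]
    (μ : Measure G) [μ.IsHaarMeasure] [IsProbabilityMeasure μ]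
    {V : Type*} [NormedAddCommGroup V] [InnerProductSpace ℂ V] [FiniteDimensional ℂ V]
    (π : G →* (V →ₗ[ℂ] V))
    (hrep : IsContUnitaryRep π) (hirr : IsIrreducibleRep π)
    (T : V →ₗ[ℂ] V) (A B : G) :
    ∫ g, LinearMap.trace ℂ V (π (A * g * B * g⁻¹) ∘ₗ T) ∂μ
      = (1 / (Module.finrank ℂ V : ℂ)) * LinearMap.trace ℂ V (π B)
          * LinearMap.trace ℂ V (π A ∘ₗ T) := by
  exact twisted_fusion_aux μ π hrep hirr T A B
end

section
/- Let G be a compact Hausdorff topological group with normalized Haar probability measure μ and Γ a finite group acting on G by continuous group automorphisms, with semidirect product G ⋊ Γ having multiplication (g,φ)·(g',φ') = (g·φ(g'), φφ'). For μ-integrable f, g: G → ℂ and φ, γ ∈ Γ, define F, H: G ⋊ Γ → ℂ by F(x,σ) = f(x) if σ = φ and 0 otherwise, and H(x,σ) = g(x) if σ = γ and 0 otherwise. Then for all (x,σ) ∈ G ⋊ Γ: (F ⋆ H)(x,σ) = (1/|Γ|)·(f ⋆ (g∘φ⁻¹))(x) if σ = φγ, and (F ⋆ H)(x,σ) = 0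 otherwise. (This is the multiplicativity of the isomorphism Φ: L²(G) ⋊ L²(Γ) → L²(G ⋊ Γ) of regularised Frobenius algebras.) -/
open MeasureTheory

/-- Convolution with respect to a measure `μ` on a group `G`. -/
noncomputable def conv {G : Type*} [Group G] [MeasurableSpace G]
    (μ : Measure G) (u v : G → ℂ) : G → ℂ :=
  fun x => ∫ y, u y * v (y⁻¹ * x) ∂μ

/-- Convolution on the semidirect product `G ⋊ Γ` of a compact group `G` with Haar
probability measure `μ` and a finite group `Γ`:
`(F ⋆ H)(x,σ) = (1/|Γ|) Σ_κ ∫ F(y,κ) H((y,κ)⁻¹ (x,σ)) dμ(y)`. -/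
noncomputable def convSD {G Γ : Type*} [Group G] [Group Γ] [Fintype Γ]
    [MeasurableSpace G] (μ : Measure G) (act : Γ →* MulAut G)
    (F H : G ⋊[act] Γ → ℂ) : G ⋊[act] Γ → ℂ :=
  fun v => (1 / (Fintype.card Γ : ℂ)) *
    ∑ κ : Γ, ∫ y, F ⟨y, κ⟩ * H ((⟨y, κ⟩ : G ⋊[act] Γ)⁻¹ * v) ∂μ

/-- Multiplicativity of the isomorphism `Φ : L²(G) ⋊ L²(Γ) → L²(G ⋊ Γ)`: convolving the
functions supported in single `Γ`-sectors reproduces the twisted product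
`(f ⊗ δ_φ) * (g ⊗ δ_γ) = (f ⋆ (g∘φ⁻¹)) ⊗ δ_{φγ}` up to the factor `1/|Γ|`. -/
theorem convSD_single_sector
    {G : Type*} [Group G] [TopologicalSpace G] [IsTopologicalGroup G]
    [CompactSpace G] [T2Space G] [MeasurableSpace G] [BorelSpace G]
    (μ : Measure G) [μ.IsHaarMeasure] [IsProbabilityMeasure μ]
    {Γ : Type*} [Group Γ] [Fintype Γ] [DecidableEq Γ]
    (act : Γ →* MulAut G) (hact : ∀ γ : Γ, Continuous (act γ))
    (f g : G → ℂ) (hf : Integrable f μ) (hg : Integrable g μ)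
    (φ γ : Γ) (F H : G ⋊[act] Γ → ℂ)
    (hF : ∀ (x : G) (σ : Γ), F ⟨x, σ⟩ = if σ = φ then f x else 0)
    (hH : ∀ (x : G) (σ : Γ), H ⟨x, σ⟩ = if σ = γ then g x else 0) :
    ∀ (x : G) (σ : Γ),
      convSD μ act F H ⟨x, σ⟩
        = if σ = φ * γ
            then (1 / (Fintype.card Γ : ℂ)) * conv μ f (fun z => g ((act φ).symm z)) x
            else 0 := by
  intro x σ
  unfold convSD
  have hinv : ∀ (y : G) (κ : Γ), ((⟨y, κ⟩ : G ⋊[act] Γ)⁻¹ * ⟨x, σ⟩) =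
      (⟨act κ⁻¹ (y⁻¹ * x), κ⁻¹ * σ⟩ : G ⋊[act] Γ) := by
    intro y κ
    ext
    · simp [map_mul]
    · simp
  have hsum : ∑ κ : Γ, ∫ y, F ⟨y, κ⟩ * H ((⟨y, κ⟩ : G ⋊[act] Γ)⁻¹ * ⟨x, σ⟩) ∂μ
      = ∫ y, f y * H (⟨act φ⁻¹ (y⁻¹ * x), φ⁻¹ * σ⟩ : G ⋊[act] Γ) ∂μ := by
    rw [Fintype.sum_eq_single φ]
    · simp only [hinv, hF, if_pos rfl, if_true, eq_self_iff_true]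
    · intro κ hκ
      simp only [hF, if_neg hκ, zero_mul, integral_zero]
  rw [hsum]
  by_cases hσ : σ = φ * γ
  · rw [if_pos hσ]
    subst hσ
    have : ∀ y : G, H (⟨act φ⁻¹ (y⁻¹ * x), φ⁻¹ * (φ * γ)⟩ : G ⋊[act] Γ)
        = g ((act φ).symm (y⁻¹ * x)) := by
      intro y
      rw [hH, if_pos (by group)]
      congr 1
      simp [map_inv, MulAut.inv_def]
    simp only [this]
    rfl
  · rw [if_neg hσ]
    have : ∀ y : G, H (⟨act φ⁻¹ (y⁻¹ * x), φ⁻¹ * σ⟩ : G ⋊[act] Γ) = 0 := by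
      intro y
      rw [hH, if_neg]
      intro h
      exact hσ (by rw [← h]; group)
    simp only [this, mul_zero, integral_zero]
end
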